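/- Let G = K_1 + (K_2 ∪ (n−2)K_1), the join of a single vertex with the disjoint union of an edge and n−2 isolated vertices, and let e be the edge of the K_2. Then D(G − e) = n while D(G) = n − 2. -/

import Mathlib

open SimpleGraph

/-- Distinguishing number: least `d` admitting a vertex labeling with `d` labels
preserved only by the identity automorphism. -/
noncomputable def distNum {V : Type*} (G : SimpleGraph V) : ℕ :=
  sInf {d : ℕ | ∃ f : V → Fin d,
    ∀ φ : G ≃g G, (∀ x : V, f (φ x) = f x) → ∀ x : V, φ x = x}

/-- Distinguishing index: least `d` admitting an edge coloring with `d` colors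
preserved only by the identity automorphism. -/
noncomputable def distIdx {V : Type*} (G : SimpleGraph V) : ℕ :=
  sInf {d : ℕ | ∃ f : Sym2 V → Fin d,
    ∀ φ : G ≃g G, (∀ e ∈ G.edgeSet, f (Sym2.map φ e) = f e) → ∀ x : V, φ x = x}

/-- `G ⊙ v`: remove all edges joining two neighbors of `v`. -/
def SimpleGraph.odot {V : Type*} (G : SimpleGraph V) (v : V) : SimpleGraph V :=
  G.deleteEdges {e | ∀ x ∈ e, G.Adj v x}

/-- Vertex contraction `G ∘ v`: delete `v` and put a clique on its neighborhood. -/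
def SimpleGraph.vContract {V : Type*} (G : SimpleGraph V) (v : V) :
    SimpleGraph {u : V // u ≠ v} where
  Adj x y := x ≠ y ∧ (G.Adj x.1 y.1 ∨ (G.Adj v x.1 ∧ G.Adj v y.1))
  symm := by
    refine ⟨?_⟩
    rintro x y ⟨h1, h2 | ⟨h3, h4⟩⟩
    exacts [⟨h1.symm, Or.inl h2.symm⟩, ⟨h1.symm, Or.inr ⟨h4, h3⟩⟩]
  loopless := ⟨fun x h => h.1 rfl⟩

/-- Edge contraction `G ∘ e` for `e = uv`: merge `v` into `u`. -/
def SimpleGraph.eContract {V : Type*} (G : SimpleGraph V) (u v : V) :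
    SimpleGraph {x : V // x ≠ v} where
  Adj x y := x ≠ y ∧ (G.Adj x.1 y.1 ∨ (x.1 = u ∧ G.Adj v y.1) ∨ (y.1 = u ∧ G.Adj v x.1))
  symm := by
    refine ⟨?_⟩
    rintro x y ⟨h1, h2⟩
    refine ⟨h1.symm, ?_⟩
    rcases h2 with h | ⟨ha, hb⟩ | ⟨ha, hb⟩
    · exact Or.inl h.symm
    · exact Or.inr (Or.inr ⟨ha, hb⟩)
    · exact Or.inr (Or.inl ⟨ha, hb⟩)
  loopless := ⟨fun x h => h.1 rfl⟩

/-- The star `K_{1,n}`. -/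
def starG (n : ℕ) : SimpleGraph (Fin 1 ⊕ Fin n) := completeBipartiteGraph (Fin 1) (Fin n)

/-- The friendship graph `F_n = K_1 + n K_2`; `none` is the central vertex. -/
def friendshipGraph (n : ℕ) : SimpleGraph (Option (Fin n × Fin 2)) where
  Adj x y := x ≠ y ∧ (x = none ∨ y = none ∨ ∃ i a b, x = some (i, a) ∧ y = some (i, b))
  symm := by
    refine ⟨?_⟩
    rintro x y ⟨h1, h2⟩
    refine ⟨h1.symm, ?_⟩
    rcases h2 with h | h | ⟨i, a, b, hx, hy⟩
    · exact Or.inr (Or.inl h)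
    · exact Or.inl h
    · exact Or.inr (Or.inr ⟨i, b, a, hy, hx⟩)
  loopless := ⟨fun x h => h.1 rfl⟩

/-- `K_1 + (K_2 ∪ (n-2) K_1)` on `Fin (n+1)`: vertex `0` is the join apex,
vertices `1, 2` form the `K_2`, the rest are the isolated vertices. -/
def joinGraph (n : ℕ) : SimpleGraph (Fin (n + 1)) where
  Adj x y := x ≠ y ∧ (x = 0 ∨ y = 0 ∨ ((x = 1 ∨ x = 2) ∧ (y = 1 ∨ y = 2)))
  symm := ⟨by rintro x y ⟨h1, h2⟩; exact ⟨h1.symm, by tauto⟩⟩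
  loopless := ⟨fun x h => h.1 rfl⟩
section
variable {n : ℕ}

lemma hv1 (hn : 4 ≤ n) : ((1 : Fin (n+1)) : ℕ) = 1 := by
  show 1 % (n+1) = 1; exact Nat.mod_eq_of_lt (by omega)

lemma hv2 (hn : 4 ≤ n) : ((2 : Fin (n+1)) : ℕ) = 2 := by
  show 2 % (n+1) = 2; exact Nat.mod_eq_of_lt (by omega)

lemma eq0_iff (a : Fin (n+1)) : a = 0 ↔ (a : ℕ) = 0 := by
  rw [Fin.ext_iff]; rfl

lemma eq1_iff (hn : 4 ≤ n) (a : Fin (n+1)) : a = 1 ↔ (a : ℕ) = 1 := by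
  rw [Fin.ext_iff, hv1 hn]

lemma eq2_iff (hn : 4 ≤ n) (a : Fin (n+1)) : a = 2 ↔ (a : ℕ) = 2 := by
  rw [Fin.ext_iff, hv2 hn]

lemma join_adj (a b : Fin (n+1)) :
    (joinGraph n).Adj a b ↔ a ≠ b ∧ (a = 0 ∨ b = 0 ∨ ((a = 1 ∨ a = 2) ∧ (b = 1 ∨ b = 2))) :=
  Iff.rfl

lemma star_adj (hn : 4 ≤ n) (a b : Fin (n+1)) :
    ((joinGraph n).deleteEdges {s((1 : Fin (n+1)), (2 : Fin (n+1)))}).Adj a b ↔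
      a ≠ b ∧ (a = 0 ∨ b = 0) := by
  rw [deleteEdges_adj, join_adj]
  simp only [Set.mem_singleton_iff, Sym2.eq_iff, ne_eq, Fin.ext_iff, Fin.val_zero, hv1 hn, hv2 hn]
  omega

end

section
variable {n : ℕ}

lemma sInf_eq_of (S : Set ℕ) (m : ℕ) (h1 : m ∈ S) (h2 : ∀ k < m, k ∉ S) : sInf S = m :=
  le_antisymm (Nat.sInf_le h1)
    (le_csInf ⟨m, h1⟩ fun k hk => not_lt.1 fun h => h2 k h hk)

lemma star_fix0 (hn : 4 ≤ n) (φ : ((joinGraph n).deleteEdges {s((1 : Fin (n+1)), (2 : Fin (n+1)))}) ≃g ((joinGraph n).deleteEdges {s((1 : Fin (n+1)), (2 : Fin (n+1)))})) : φ 0 = 0 := by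
  by_contra h
  have key : ∀ x : Fin (n+1), x ≠ 0 → φ x = 0 := by
    intro x hx
    have hadj : ((joinGraph n).deleteEdges {s((1 : Fin (n+1)), (2 : Fin (n+1)))}).Adj 0 x := (star_adj hn 0 x).2 ⟨Ne.symm hx, Or.inl rfl⟩
    have := (φ.map_rel_iff (a := 0) (b := x)).2 hadj
    rcases (star_adj hn _ _).1 this with ⟨-, h0 | h0⟩
    · exact absurd h0 h
    · exact h0
  have h3 : (⟨3, by omega⟩ : Fin (n+1)) ≠ 0 := Fin.ne_of_val_ne (by simp)
  have h1 : (1 : Fin (n+1)) ≠ 0 := Fin.ne_of_val_ne (by simp [hv1 hn]; omega)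
  have := φ.injective ((key 1 h1).trans (key ⟨3, by omega⟩ h3).symm)
  rw [Fin.ext_iff, hv1 hn] at this
  simp at this

lemma join_fix0 (hn : 4 ≤ n) (φ : joinGraph n ≃g joinGraph n) : φ 0 = 0 := by
  by_contra h
  have key : ∀ x : Fin (n+1), x ≠ 0 →
      φ x = 0 ∨ ((φ 0 = 1 ∨ φ 0 = 2) ∧ (φ x = 1 ∨ φ x = 2)) := by
    intro x hx
    have hadj : (joinGraph n).Adj 0 x := ⟨Ne.symm hx, Or.inl rfl⟩
    have h2 := (φ.map_rel_iff (a := 0) (b := x)).2 hadj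
    rcases h2 with ⟨-, h0 | h0 | h0⟩
    · exact absurd h0 h
    · exact Or.inl h0
    · exact Or.inr h0
  have h1ne : (1 : Fin (n+1)) ≠ 0 := Fin.ne_of_val_ne (by simp [hv1 hn]; omega)
  have h3ne : (⟨3, by omega⟩ : Fin (n+1)) ≠ 0 := Fin.ne_of_val_ne (by simp)
  have h4ne : (⟨4, by omega⟩ : Fin (n+1)) ≠ 0 := Fin.ne_of_val_ne (by simp)
  have k1 := key 1 h1ne
  have k3 := key ⟨3, by omega⟩ h3ne
  have k4 := key ⟨4, by omega⟩ h4ne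
  have d13 : φ 1 ≠ φ ⟨3, by omega⟩ := fun hh => by
    have := φ.injective hh; rw [Fin.ext_iff, hv1 hn] at this; simp at this
  have d14 : φ 1 ≠ φ ⟨4, by omega⟩ := fun hh => by
    have := φ.injective hh; rw [Fin.ext_iff, hv1 hn] at this; simp at this
  have d34 : φ ⟨3, by omega⟩ ≠ φ ⟨4, by omega⟩ := fun hh => by
    have := φ.injective hh; rw [Fin.ext_iff] at this; simp at this
  have a1 : φ 0 ≠ φ 1 := fun hh => h1ne (φ.injective hh).symm
  have a3 : φ 0 ≠ φ ⟨3, by omega⟩ := fun hh => h3ne (φ.injective hh).symm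
  have a4 : φ 0 ≠ φ ⟨4, by omega⟩ := fun hh => h4ne (φ.injective hh).symm
  rw [eq0_iff] at h
  simp only [eq0_iff, eq1_iff hn, eq2_iff hn] at k1 k3 k4
  replace d13 := Fin.val_ne_of_ne d13
  replace d14 := Fin.val_ne_of_ne d14
  replace d34 := Fin.val_ne_of_ne d34
  replace a1 := Fin.val_ne_of_ne a1
  replace a3 := Fin.val_ne_of_ne a3
  replace a4 := Fin.val_ne_of_ne a4
  omega

end

section
variable {n : ℕ}

/-- value function for labeling of the join graph -/
def jl (n : ℕ) (x : Fin (n+1)) : ℕ :=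
  if 3 ≤ x.val then x.val - 3 else if x.val = 2 then 1 else 0

lemma starSwapIso (hn : 4 ≤ n) (x y : Fin (n+1)) (hx : x ≠ 0) (hy : y ≠ 0) :
    ∃ φ : ((joinGraph n).deleteEdges {s((1 : Fin (n+1)), (2 : Fin (n+1)))}) ≃g
      ((joinGraph n).deleteEdges {s((1 : Fin (n+1)), (2 : Fin (n+1)))}),
      ∀ z, φ z = Equiv.swap x y z := by
  have h0 : Equiv.swap x y 0 = 0 := Equiv.swap_apply_of_ne_of_ne (Ne.symm hx) (Ne.symm hy)
  have hz : ∀ a : Fin (n+1), Equiv.swap x y a = 0 ↔ a = 0 := fun a =>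
    ⟨fun h => (Equiv.swap x y).injective (h.trans h0.symm), fun h => by rw [h, h0]⟩
  refine ⟨⟨Equiv.swap x y, ?_⟩, fun z => rfl⟩
  intro a b
  rw [star_adj hn, star_adj hn]
  simp only [ne_eq, Equiv.apply_eq_iff_eq, hz]

lemma joinSwapIso (hn : 4 ≤ n) (x y : Fin (n+1)) (hx : 3 ≤ x.val) (hy : 3 ≤ y.val) :
    ∃ φ : joinGraph n ≃g joinGraph n, ∀ z, φ z = Equiv.swap x y z := by
  have fix : ∀ c : Fin (n+1), c.val < 3 → Equiv.swap x y c = c := fun c hc =>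
    Equiv.swap_apply_of_ne_of_ne (Fin.ne_of_val_ne (by omega)) (Fin.ne_of_val_ne (by omega))
  have hz : ∀ (a c : Fin (n+1)), c.val < 3 → (Equiv.swap x y a = c ↔ a = c) := fun a c hc =>
    ⟨fun h => (Equiv.swap x y).injective (h.trans (fix c hc).symm),
     fun h => by rw [h, fix c hc]⟩
  have v0 : ((0 : Fin (n+1)) : ℕ) < 3 := by simp
  have v1 : ((1 : Fin (n+1)) : ℕ) < 3 := by rw [hv1 hn]; omega
  have v2 : ((2 : Fin (n+1)) : ℕ) < 3 := by rw [hv2 hn]; omega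
  refine ⟨⟨Equiv.swap x y, ?_⟩, fun z => rfl⟩
  intro a b
  rw [join_adj, join_adj]
  simp only [ne_eq, Equiv.apply_eq_iff_eq, hz _ _ v0, hz _ _ v1, hz _ _ v2]

lemma star_mem (hn : 4 ≤ n) :
    n ∈ {d : ℕ | ∃ f : Fin (n+1) → Fin d,
      ∀ φ : ((joinGraph n).deleteEdges {s((1 : Fin (n+1)), (2 : Fin (n+1)))}) ≃g
        ((joinGraph n).deleteEdges {s((1 : Fin (n+1)), (2 : Fin (n+1)))}),
        (∀ x, f (φ x) = f x) → ∀ x, φ x = x} := by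
  refine ⟨fun x => ⟨x.val - 1, by have := x.isLt; omega⟩, fun φ hpres x => ?_⟩
  have h0 := star_fix0 hn φ
  by_cases hx : x = 0
  · rw [hx]; exact h0
  · have hphx : φ x ≠ 0 := fun h => hx (φ.injective (h.trans h0.symm))
    have hv := congrArg Fin.val (hpres x)
    simp only at hv
    rw [eq0_iff] at hx
    replace hphx := Fin.val_ne_of_ne hphx
    rw [Fin.val_zero] at hphx
    exact Fin.ext (by omega)

lemma star_not_mem (hn : 4 ≤ n) (d : ℕ) (hd : d < n) :
    d ∉ {d : ℕ | ∃ f : Fin (n+1) → Fin d,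
      ∀ φ : ((joinGraph n).deleteEdges {s((1 : Fin (n+1)), (2 : Fin (n+1)))}) ≃g
        ((joinGraph n).deleteEdges {s((1 : Fin (n+1)), (2 : Fin (n+1)))}),
        (∀ x, f (φ x) = f x) → ∀ x, φ x = x} := by
  rintro ⟨f, hf⟩
  obtain ⟨i, j, hij, hfe⟩ := Fintype.exists_ne_map_eq_of_card_lt
    (fun i : Fin n => f i.succ) (by simpa using hd)
  set x := i.succ with hxdef
  set y := j.succ with hydef
  have hxy : x ≠ y := fun h => hij (Fin.succ_injective _ h)
  obtain ⟨φ, hφ⟩ := starSwapIso hn x y (Fin.succ_ne_zero i) (Fin.succ_ne_zero j)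
  have hpres : ∀ z, f (φ z) = f z := by
    intro z
    rw [hφ]
    rcases eq_or_ne z x with rfl | hzx
    · rw [Equiv.swap_apply_left]; exact hfe.symm
    rcases eq_or_ne z y with rfl | hzy
    · rw [Equiv.swap_apply_right]; exact hfe
    · rw [Equiv.swap_apply_of_ne_of_ne hzx hzy]
  have := hf φ hpres x
  rw [hφ, Equiv.swap_apply_left] at this
  exact hxy this.symm

end

section
variable {n : ℕ}

lemma jl_lt (hn : 4 ≤ n) (x : Fin (n+1)) : jl n x < n - 2 := by
  have := x.isLt
  unfold jl; split_ifs <;> omega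

lemma join_mem (hn : 4 ≤ n) :
    n - 2 ∈ {d : ℕ | ∃ f : Fin (n+1) → Fin d,
      ∀ φ : joinGraph n ≃g joinGraph n, (∀ x, f (φ x) = f x) → ∀ x, φ x = x} := by
  refine ⟨fun x => ⟨jl n x, jl_lt hn x⟩, fun φ hpres => ?_⟩
  have h0 := join_fix0 hn φ
  have h1ne0 : (1 : Fin (n+1)) ≠ 0 := Fin.ne_of_val_ne (by rw [hv1 hn, Fin.val_zero]; omega)
  have h2ne0 : (2 : Fin (n+1)) ≠ 0 := Fin.ne_of_val_ne (by rw [hv2 hn, Fin.val_zero]; omega)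
  have h12 : (1 : Fin (n+1)) ≠ 2 := Fin.ne_of_val_ne (by rw [hv1 hn, hv2 hn]; omega)
  have hadj12 : (joinGraph n).Adj 1 2 :=
    ⟨h12, Or.inr (Or.inr ⟨Or.inl rfl, Or.inr rfl⟩)⟩
  obtain ⟨-, hcase⟩ := (join_adj _ _).1 (φ.map_rel_iff.2 hadj12)
  have hφ1ne0 : φ 1 ≠ 0 := fun h => h1ne0 (φ.injective (h.trans h0.symm))
  have hφ2ne0 : φ 2 ≠ 0 := fun h => h2ne0 (φ.injective (h.trans h0.symm))
  have c12 : (φ 1 = 1 ∨ φ 1 = 2) ∧ (φ 2 = 1 ∨ φ 2 = 2) := by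
    rcases hcase with h | h | h
    · exact absurd h hφ1ne0
    · exact absurd h hφ2ne0
    · exact h
  have jl1 : jl n (1 : Fin (n+1)) = 0 := by unfold jl; rw [hv1 hn]; norm_num
  have jl2 : jl n (2 : Fin (n+1)) = 1 := by unfold jl; rw [hv2 hn]; norm_num
  have hφ1 : φ 1 = 1 := by
    rcases c12.1 with h | h
    · exact h
    · exfalso
      have hv := congrArg Fin.val (hpres 1)
      simp only at hv
      rw [h, jl1, jl2] at hv
      omega
  have hφ2 : φ 2 = 2 := by
    rcases c12.2 with h | h
    · exact absurd (φ.injective (h.trans hφ1.symm)) (Ne.symm h12)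
    · exact h
  intro x
  by_cases hx0 : x = 0
  · rw [hx0]; exact h0
  by_cases hx1 : x = 1
  · rw [hx1]; exact hφ1
  by_cases hx2 : x = 2
  · rw [hx2]; exact hφ2
  have hx3 : 3 ≤ x.val := by
    have e0 := Fin.val_ne_of_ne hx0
    have e1 := Fin.val_ne_of_ne hx1
    have e2 := Fin.val_ne_of_ne hx2
    rw [Fin.val_zero] at e0
    rw [hv1 hn] at e1
    rw [hv2 hn] at e2
    omega
  have hφx0 : φ x ≠ 0 := fun h => hx0 (φ.injective (h.trans h0.symm))
  have hφx1 : φ x ≠ 1 := fun h => hx1 (φ.injective (h.trans hφ1.symm))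
  have hφx2 : φ x ≠ 2 := fun h => hx2 (φ.injective (h.trans hφ2.symm))
  have hφx3 : 3 ≤ (φ x).val := by
    have e0 := Fin.val_ne_of_ne hφx0
    have e1 := Fin.val_ne_of_ne hφx1
    have e2 := Fin.val_ne_of_ne hφx2
    rw [Fin.val_zero] at e0
    rw [hv1 hn] at e1
    rw [hv2 hn] at e2
    omega
  have hv := congrArg Fin.val (hpres x)
  simp only at hv
  unfold jl at hv
  apply Fin.ext
  split_ifs at hv <;> omega


lemma join_kill {n : ℕ} (hn : 4 ≤ n) {d : ℕ} (f : Fin (n+1) → Fin d)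
    (hf : ∀ φ : joinGraph n ≃g joinGraph n, (∀ x, f (φ x) = f x) → ∀ x, φ x = x)
    (x y : Fin (n+1)) (hx : 3 ≤ x.val) (hy : 3 ≤ y.val) (hxy : x ≠ y)
    (hfe : f x = f y) : False := by
  obtain ⟨φ, hφ⟩ := joinSwapIso hn x y hx hy
  have hpres : ∀ z, f (φ z) = f z := by
    intro z
    rw [hφ]
    rcases eq_or_ne z x with rfl | hzx
    · rw [Equiv.swap_apply_left]; exact hfe.symm
    rcases eq_or_ne z y with rfl | hzy
    · rw [Equiv.swap_apply_right]; exact hfe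
    · rw [Equiv.swap_apply_of_ne_of_ne hzx hzy]
  have := hf φ hpres x
  rw [hφ, Equiv.swap_apply_left] at this
  exact hxy this.symm

lemma join_not_mem {n : ℕ} (hn : 4 ≤ n) (d : ℕ) (hd : d < n - 2) :
    d ∉ {d : ℕ | ∃ f : Fin (n+1) → Fin d,
      ∀ φ : joinGraph n ≃g joinGraph n, (∀ x, f (φ x) = f x) → ∀ x, φ x = x} := by
  rintro ⟨f, hf⟩
  obtain ⟨i, j, hij, hfe⟩ := Fintype.exists_ne_map_eq_of_card_lt
    (fun i : Fin (n - 2) => f ⟨i.val + 3, by have := i.isLt; omega⟩)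
    (by simp only [Fintype.card_fin]; exact hd)
  exact join_kill hn f hf _ _ (Nat.le_add_left 3 i.val) (Nat.le_add_left 3 j.val)
    (fun h => hij (Fin.ext (by simpa using congrArg Fin.val h))) hfe

end

theorem stmt7 (n : ℕ) (hn : 4 ≤ n) :
    distNum ((joinGraph n).deleteEdges {s((1 : Fin (n + 1)), (2 : Fin (n + 1)))}) = n ∧
    distNum (joinGraph n) = n - 2 := by
  unfold distNum
  refine ⟨?_, ?_⟩
  · exact sInf_eq_of _ n (star_mem hn) (fun k hk => star_not_mem hn k hk)
  · exact sInf_eq_of _ (n - 2) (join_mem hn) (fun k hk => join_not_mem hn k hk)
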